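/- Let a ≥ 0, q with second moment m₂ < ∞, and (Y_n^{(k)}) the rescaled generalized DR process as above with renewal rate a/k. Then the one-step second-moment bound E[(Y_{n+1}^{(k)})²] ≤ (1 + a(2m₂+1)/k) E[(Y_n^{(k)})²] holds, and consequently E[(Y_{⌊kt⌋}^{(k)})²] ≤ e^{a(2m₂+1)t} E[(Y₀^{(k)})²] for all t ≥ 0. -/

import Mathlib

open MeasureTheory ProbabilityTheory Filter
open scoped ENNReal NNReal

noncomputable section

/-- Truncated Euclidean cost `ρ(x,y) = min(1, |x-y|)` on `ℝ≥0`. -/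
def rho (x y : ℝ≥0) : ℝ := min 1 |(x : ℝ) - (y : ℝ)|

/-- `π` is a coupling of `μ` and `ν`. -/
def IsCoupling (π : Measure (ℝ≥0 × ℝ≥0)) (μ ν : Measure ℝ≥0) : Prop :=
  π.map Prod.fst = μ ∧ π.map Prod.snd = ν

/-- Wasserstein distance for the truncated cost. -/
def W (μ ν : Measure ℝ≥0) : ℝ :=
  sInf { r : ℝ | ∃ π : Measure (ℝ≥0 × ℝ≥0),
    IsProbabilityMeasure π ∧ IsCoupling π μ ν ∧ r = ∫ p, rho p.1 p.2 ∂π }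

/-- Convolution of two measures on `ℝ≥0`. -/
def conv (μ ν : Measure ℝ≥0) : Measure ℝ≥0 :=
  (μ.prod ν).map (fun p => p.1 + p.2)

/-- `k`-fold convolution power (`convPow μ 0 = δ₀`). -/
def convPow (μ : Measure ℝ≥0) : ℕ → Measure ℝ≥0
  | 0 => Measure.dirac 0
  | n + 1 => conv (convPow μ n) μ

/-- The `q`-mixture `μ^q = ∑_{k≥1} q_k μ^{*k}` (`q k` = weight of `k`). -/
def qMix (q : ℕ → ℝ≥0) (μ : Measure ℝ≥0) : Measure ℝ≥0 :=
  Measure.sum (fun k => ((q (k + 1) : ℝ≥0∞)) • convPow μ (k + 1))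

/-- Total variation norm of the difference of two finite measures. -/
def tvDist (μ ν : Measure ℝ≥0) : ℝ :=
  sSup { r : ℝ | ∃ s : Set ℝ≥0, MeasurableSet s ∧
    r = |(μ s).toReal - (ν s).toReal| + |(μ sᶜ).toReal - (ν sᶜ).toReal| }

lemma tsum_shift' (f : ℕ → ℝ≥0∞) (h0 : f 0 = 0) : ∑' j, f j = ∑' j, f (j+1) := by
  rw [tsum_eq_zero_add' ENNReal.summable, h0, zero_add]

lemma lintegral_conv (μ ν : Measure ℝ≥0) [SFinite μ] [SFinite ν]
    (f : ℝ≥0 → ℝ≥0∞) (hf : Measurable f) :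
    ∫⁻ z, f z ∂(conv μ ν) = ∫⁻ x, ∫⁻ y, f (x + y) ∂ν ∂μ := by
  rw [conv, lintegral_map hf measurable_add]
  exact lintegral_prod _ (hf.comp measurable_add).aemeasurable

instance conv_prob (μ ν : Measure ℝ≥0) [IsProbabilityMeasure μ] [IsProbabilityMeasure ν] :
    IsProbabilityMeasure (conv μ ν) :=
  Measure.isProbabilityMeasure_map measurable_add.aemeasurable

instance convPow_prob (μ : Measure ℝ≥0) [IsProbabilityMeasure μ] (n : ℕ) :
    IsProbabilityMeasure (convPow μ n) := by
  induction n with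
  | zero => exact Measure.dirac.isProbabilityMeasure
  | succ n ih => exact conv_prob _ _

lemma lintegral_convPow_id (μ : Measure ℝ≥0) [IsProbabilityMeasure μ] (n : ℕ) :
    ∫⁻ z, (z : ℝ≥0∞) ∂(convPow μ n) = n * ∫⁻ z, (z : ℝ≥0∞) ∂μ := by
  induction n with
  | zero => simp [convPow, lintegral_dirac]
  | succ n ih =>
      rw [show convPow μ (n+1) = conv (convPow μ n) μ from rfl,
        lintegral_conv _ _ _ measurable_coe_nnreal_ennreal]
      have h1 : ∀ x y : ℝ≥0, ((x + y : ℝ≥0) : ℝ≥0∞) = (x : ℝ≥0∞) + y := by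
        intro x y; push_cast; ring
      simp_rw [h1]
      rw [lintegral_congr (fun x => lintegral_add_left measurable_const _)]
      simp only [lintegral_const, measure_univ, mul_one]
      rw [lintegral_add_right _ measurable_const, lintegral_const, ih]
      simp only [measure_univ, mul_one]
      push_cast; ring

lemma cs_sq {α : Type*} [MeasurableSpace α] (μ : Measure α) [IsProbabilityMeasure μ]
    (f : α → ℝ≥0∞) (hf : AEMeasurable f μ) :
    (∫⁻ z, f z ∂μ) ^ 2 ≤ ∫⁻ z, (f z) ^ 2 ∂μ := by
  have h := ENNReal.lintegral_mul_le_Lp_mul_Lq μ (p := 2) (q := 2)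
    Real.HolderConjugate.two_two hf (g := fun _ => (1:ℝ≥0∞)) aemeasurable_const
  simp only [Pi.mul_apply, mul_one, ENNReal.one_rpow, lintegral_const, measure_univ,
    ENNReal.one_rpow, one_mul] at h
  have h2 : (∫⁻ z, f z ∂μ) ^ (2:ℝ) ≤ ((∫⁻ a, f a ^ (2:ℝ) ∂μ) ^ (1/(2:ℝ))) ^ (2:ℝ) :=
    ENNReal.rpow_le_rpow h (by norm_num)
  rw [← ENNReal.rpow_natCast (∫⁻ z, f z ∂μ) 2]
  push_cast
  refine h2.trans_eq ?_
  rw [← ENNReal.rpow_mul]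
  norm_num

lemma lintegral_convPow_sq (μ : Measure ℝ≥0) [IsProbabilityMeasure μ] (n : ℕ) :
    ∫⁻ z, (z : ℝ≥0∞) ^ 2 ∂(convPow μ n) ≤ (n : ℝ≥0∞) ^ 2 * ∫⁻ z, (z : ℝ≥0∞) ^ 2 ∂μ := by
  set M := ∫⁻ z, (z : ℝ≥0∞) ^ 2 ∂μ with hM
  set m := ∫⁻ z, (z : ℝ≥0∞) ∂μ with hm
  have hm2 : m ^ 2 ≤ M := cs_sq μ _ measurable_coe_nnreal_ennreal.aemeasurable
  induction n with
  | zero => simp [convPow, lintegral_dirac]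
  | succ n ih =>
      rw [show convPow μ (n+1) = conv (convPow μ n) μ from rfl,
        lintegral_conv _ _ _ (measurable_coe_nnreal_ennreal.pow_const 2)]
      have h1 : ∀ x y : ℝ≥0, (((x + y : ℝ≥0) : ℝ≥0∞)) ^ 2
          = (x:ℝ≥0∞)^2 + (2 * x) * y + (y:ℝ≥0∞)^2 := by
        intro x y; push_cast; ring
      simp_rw [h1]
      have hmy : Measurable fun y : ℝ≥0 => (y : ℝ≥0∞) ^ 2 :=
        measurable_coe_nnreal_ennreal.pow_const 2
      have hstep : ∀ x : ℝ≥0, ∫⁻ y, ((x:ℝ≥0∞)^2 + (2*x) * y + (y:ℝ≥0∞)^2) ∂μ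
          = (x:ℝ≥0∞)^2 + (2*x) * m + M := by
        intro x
        rw [lintegral_add_right _ hmy, lintegral_add_right _
          (measurable_coe_nnreal_ennreal.const_mul _), lintegral_const_mul _
          measurable_coe_nnreal_ennreal, lintegral_const]
        simp [measure_univ]
        rfl
      rw [lintegral_congr hstep]
      rw [lintegral_add_right _ measurable_const,
        lintegral_add_right _ ((measurable_coe_nnreal_ennreal.const_mul 2).mul_const m)]
      simp_rw [show ∀ x : ℝ≥0, (2*(x:ℝ≥0∞))*m = (2*m)*x from fun x => by ring]
      rw [lintegral_const_mul _ measurable_coe_nnreal_ennreal, lintegral_convPow_id,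
        lintegral_const]
      simp only [measure_univ, mul_one]
      calc ∫⁻ z, (z:ℝ≥0∞)^2 ∂(convPow μ n) + 2*m*(n*m) + M
          ≤ (n:ℝ≥0∞)^2 * M + 2*n*(m^2) + M :=
            add_le_add (add_le_add ih (le_of_eq (by ring))) le_rfl
        _ ≤ (n:ℝ≥0∞)^2 * M + 2*n*M + M := by gcongr
        _ = ((n+1:ℕ):ℝ≥0∞)^2 * M := by push_cast; ring

lemma lintegral_qMix (q : ℕ → ℝ≥0) (μ : Measure ℝ≥0) (f : ℝ≥0 → ℝ≥0∞) :
    ∫⁻ z, f z ∂(qMix q μ) = ∑' j, (q (j+1) : ℝ≥0∞) * ∫⁻ z, f z ∂(convPow μ (j+1)) := by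
  rw [qMix, lintegral_sum_measure]
  simp_rw [lintegral_smul_measure]
  simp only [smul_eq_mul]

lemma lintegral_qMix_id (q : ℕ → ℝ≥0) (μ : Measure ℝ≥0) [IsProbabilityMeasure μ] :
    ∫⁻ z, (z : ℝ≥0∞) ∂(qMix q μ) = (∑' j : ℕ, (j:ℝ≥0∞) * q j) * ∫⁻ z, (z : ℝ≥0∞) ∂μ := by
  rw [lintegral_qMix]
  simp_rw [lintegral_convPow_id]
  rw [tsum_shift' (fun j : ℕ => (j:ℝ≥0∞) * q j) (by simp), ← ENNReal.tsum_mul_right]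
  congr 1; funext j; push_cast; ring

lemma lintegral_qMix_sq (q : ℕ → ℝ≥0) (μ : Measure ℝ≥0) [IsProbabilityMeasure μ] :
    ∫⁻ z, (z : ℝ≥0∞)^2 ∂(qMix q μ)
      ≤ (∑' j : ℕ, (j:ℝ≥0∞)^2 * q j) * ∫⁻ z, (z : ℝ≥0∞)^2 ∂μ := by
  rw [lintegral_qMix]
  calc ∑' j : ℕ, (q (j+1) : ℝ≥0∞) * ∫⁻ z, (z : ℝ≥0∞)^2 ∂(convPow μ (j+1))
      ≤ ∑' j : ℕ, (q (j+1) : ℝ≥0∞) * (((j+1:ℕ):ℝ≥0∞)^2 * ∫⁻ z, (z : ℝ≥0∞)^2 ∂μ) :=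
        ENNReal.tsum_le_tsum fun j => mul_le_mul_of_nonneg_left (lintegral_convPow_sq μ (j+1)) zero_le
    _ = ∑' j : ℕ, (((j+1:ℕ):ℝ≥0∞)^2 * q (j+1)) * ∫⁻ z, (z : ℝ≥0∞)^2 ∂μ := by
        congr 1; funext j; ring
    _ = (∑' j : ℕ, (((j+1:ℕ):ℝ≥0∞))^2 * q (j+1)) * ∫⁻ z, (z : ℝ≥0∞)^2 ∂μ :=
        ENNReal.tsum_mul_right
    _ = (∑' j : ℕ, (j:ℝ≥0∞)^2 * q j) * ∫⁻ z, (z : ℝ≥0∞)^2 ∂μ := by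
        rw [tsum_shift' (fun j : ℕ => (j:ℝ≥0∞)^2 * q j) (by simp)]

lemma one_step {Ω : Type*} [MeasurableSpace Ω] (P : Measure Ω) [IsProbabilityMeasure P]
    (a : ℝ) (ha : 0 ≤ a) (k : ℕ) (hk : 1 ≤ k)
    (q : ℕ → ℝ≥0)
    (Yn ηn Zn Yn1 : Ω → ℝ≥0)
    (hY : Measurable Yn) (hη : Measurable ηn) (hZ : Measurable Zn)
    (hrec : ∀ ω, Yn1 ω = Yn ω + ((k:ℝ≥0))⁻¹ * ηn ω * Zn ω - ((k:ℝ≥0))⁻¹)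
    (hZlaw : P.map Zn = qMix q (P.map Yn))
    (hη01 : ∀ ω, ηn ω = 0 ∨ ηn ω = 1)
    (hηlaw : P {ω | ηn ω = 1} = ENNReal.ofReal (a / k))
    (hindep : IndepFun (fun ω => (ηn ω, Zn ω)) Yn P)
    (hηZ : IndepFun ηn Zn P)
    (m₁' m₂' : ℝ≥0∞)
    (hm₁ : ∑' j : ℕ, (j:ℝ≥0∞) * q j = m₁')
    (hm₂ : ∑' j : ℕ, (j:ℝ≥0∞)^2 * q j = m₂')
    (h12 : 2 * m₁' ≤ m₂' + 1) :
    ∫⁻ ω, ((Yn1 ω:ℝ≥0∞))^2 ∂P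
      ≤ (1 + ENNReal.ofReal a * (2*m₂' + 1) * ((k:ℝ≥0∞))⁻¹) * ∫⁻ ω, ((Yn ω:ℝ≥0∞))^2 ∂P := by
  have hk0 : (k:ℝ≥0) ≠ 0 := by positivity
  have hkE0 : (k:ℝ≥0∞) ≠ 0 := by positivity
  set c : ℝ≥0∞ := ((k:ℝ≥0∞))⁻¹ with hc
  have hc1 : c ≤ 1 := by
    rw [hc]; exact ENNReal.inv_le_one.2 (by exact_mod_cast hk)
  set u : Ω → ℝ≥0∞ := fun ω => ((Yn ω : ℝ≥0∞)) with hu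
  set v : Ω → ℝ≥0∞ := fun ω => ((ηn ω : ℝ≥0∞)) with hv
  set w : Ω → ℝ≥0∞ := fun ω => ((Zn ω : ℝ≥0∞)) with hw
  have hum : Measurable u := measurable_coe_nnreal_ennreal.comp hY
  have hvm : Measurable v := measurable_coe_nnreal_ennreal.comp hη
  have hwm : Measurable w := measurable_coe_nnreal_ennreal.comp hZ
  set M : ℝ≥0∞ := ∫⁻ ω, (u ω)^2 ∂P with hM
  set mY : ℝ≥0∞ := ∫⁻ ω, u ω ∂P with hmY
  haveI : IsProbabilityMeasure (P.map Yn) := Measure.isProbabilityMeasure_map hY.aemeasurable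
  have hmapid : ∫⁻ z, (z:ℝ≥0∞) ∂(P.map Yn) = mY := by
    rw [lintegral_map measurable_coe_nnreal_ennreal hY]
  have hmapsq : ∫⁻ z, (z:ℝ≥0∞)^2 ∂(P.map Yn) = M := by
    rw [lintegral_map (measurable_coe_nnreal_ennreal.pow_const 2) hY]
  have hZ1 : ∫⁻ ω, w ω ∂P = m₁' * mY := by
    rw [hw, ← lintegral_map measurable_coe_nnreal_ennreal hZ, hZlaw,
      lintegral_qMix_id, hmapid, hm₁]
  have hZ2 : ∫⁻ ω, (w ω)^2 ∂P ≤ m₂' * M := by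
    calc ∫⁻ ω, (w ω)^2 ∂P = ∫⁻ z, (z:ℝ≥0∞)^2 ∂(qMix q (P.map Yn)) := by
          rw [← hZlaw, lintegral_map (measurable_coe_nnreal_ennreal.pow_const 2) hZ]
      _ ≤ _ := by rw [← hm₂, ← hmapsq]; exact lintegral_qMix_sq q (P.map Yn)
  have hηint : ∫⁻ ω, v ω ∂P = ENNReal.ofReal a * c := by
    have hset : MeasurableSet {ω | ηn ω = 1} := hη (measurableSet_singleton 1)
    have : v = Set.indicator {ω | ηn ω = 1} (fun _ => (1:ℝ≥0∞)) := by
      funext ω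
      rcases hη01 ω with h | h
      · have : ω ∉ {ω | ηn ω = 1} := by simp [h]
        simp [hv, h, Set.indicator_of_notMem this]
      · have : ω ∈ {ω | ηn ω = 1} := h
        simp [hv, h, Set.indicator_of_mem this]
    rw [this]
    rw [show ({ω | ηn ω = 1}.indicator fun _ => (1:ℝ≥0∞)) = ({ω | ηn ω = 1}.indicator 1) from rfl]
    rw [lintegral_indicator_one hset, hηlaw, div_eq_mul_inv,
      ENNReal.ofReal_mul ha, hc, ENNReal.ofReal_inv_of_pos (by positivity),
      ENNReal.ofReal_natCast]
  have i1 : IndepFun (fun ω => v ω * w ω) u P := by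
    have := hindep.comp (φ := fun p : ℝ≥0 × ℝ≥0 => ((p.1:ℝ≥0∞)) * ((p.2:ℝ≥0∞)))
      (ψ := fun x : ℝ≥0 => (x:ℝ≥0∞))
      ((measurable_coe_nnreal_ennreal.comp measurable_fst).mul
        (measurable_coe_nnreal_ennreal.comp measurable_snd))
      measurable_coe_nnreal_ennreal
    exact this
  have i2 : IndepFun v w P :=
    hηZ.comp measurable_coe_nnreal_ennreal measurable_coe_nnreal_ennreal
  have i3 : IndepFun v (fun ω => (w ω)^2) P :=
    hηZ.comp measurable_coe_nnreal_ennreal (measurable_coe_nnreal_ennreal.pow_const 2)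
  have hpt : ∀ ω, ((Yn1 ω:ℝ≥0∞))^2
      ≤ (u ω)^2 + (2*c) * ((v ω * w ω) * u ω) + c^2 * (v ω * (w ω)^2) := by
    intro ω
    have h1 : Yn1 ω ≤ Yn ω + (k:ℝ≥0)⁻¹ * ηn ω * Zn ω := by
      rw [hrec ω]; exact tsub_le_self
    have h2 : ((Yn1 ω:ℝ≥0∞)) ≤ u ω + c * (v ω * w ω) := by
      calc ((Yn1 ω:ℝ≥0∞)) ≤ ((Yn ω + (k:ℝ≥0)⁻¹ * ηn ω * Zn ω : ℝ≥0) : ℝ≥0∞) :=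
            ENNReal.coe_le_coe.2 h1
        _ = u ω + c * (v ω * w ω) := by
            push_cast [ENNReal.coe_inv hk0]
            rw [hc, hu, hv, hw]; push_cast; ring
    have hvsq : (v ω)^2 = v ω := by
      rcases hη01 ω with h | h <;> simp [hv, h]
    calc ((Yn1 ω:ℝ≥0∞))^2 ≤ (u ω + c * (v ω * w ω))^2 := pow_le_pow_left' h2 2
      _ = (u ω)^2 + (2*c) * ((v ω * w ω) * u ω) + c^2 * ((v ω)^2 * (w ω)^2) := by ring
      _ = _ := by rw [hvsq]
  have key : ∫⁻ ω, ((Yn1 ω:ℝ≥0∞))^2 ∂P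
      ≤ M + (2*c) * ((ENNReal.ofReal a * c) * (m₁' * mY) * mY)
        + c^2 * ((ENNReal.ofReal a * c) * (m₂' * M)) := by
    calc ∫⁻ ω, ((Yn1 ω:ℝ≥0∞))^2 ∂P
        ≤ ∫⁻ ω, ((u ω)^2 + (2*c) * ((v ω * w ω) * u ω) + c^2 * (v ω * (w ω)^2)) ∂P :=
          lintegral_mono hpt
      _ = M + (2*c) * ∫⁻ ω, (v ω * w ω) * u ω ∂P + c^2 * ∫⁻ ω, v ω * (w ω)^2 ∂P := by
          rw [lintegral_add_right _ (by fun_prop : Measurable fun ω => c^2 * (v ω * (w ω)^2)),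
            lintegral_add_right _ (by fun_prop : Measurable fun ω => (2*c) * ((v ω * w ω) * u ω)),
            lintegral_const_mul _ (by fun_prop : Measurable fun ω => (v ω * w ω) * u ω),
            lintegral_const_mul _ (by fun_prop : Measurable fun ω => v ω * (w ω)^2)]
      _ = M + (2*c) * ((∫⁻ ω, v ω * w ω ∂P) * mY) + c^2 * ((∫⁻ ω, v ω ∂P) * ∫⁻ ω, (w ω)^2 ∂P) := by
          rw [lintegral_mul_eq_lintegral_mul_lintegral_of_indepFun''
              (by fun_prop : Measurable fun ω => v ω * w ω).aemeasurable hum.aemeasurable i1,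
            lintegral_mul_eq_lintegral_mul_lintegral_of_indepFun''
              hvm.aemeasurable ((hwm.pow_const 2)).aemeasurable i3]
      _ = M + (2*c) * (((∫⁻ ω, v ω ∂P) * ∫⁻ ω, w ω ∂P) * mY)
            + c^2 * ((∫⁻ ω, v ω ∂P) * ∫⁻ ω, (w ω)^2 ∂P) := by
          rw [lintegral_mul_eq_lintegral_mul_lintegral_of_indepFun''
            hvm.aemeasurable hwm.aemeasurable i2]
      _ ≤ _ := by
          rw [hηint, hZ1]
          gcongr
  have hmY2 : mY^2 ≤ M := by
    rw [hmY, hM]; exact cs_sq P u hum.aemeasurable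
  have hfin : (2*c) * ((ENNReal.ofReal a * c) * (m₁' * mY) * mY)
        + c^2 * ((ENNReal.ofReal a * c) * (m₂' * M))
      ≤ ENNReal.ofReal a * (2*m₂' + 1) * c * M := by
    calc (2*c) * ((ENNReal.ofReal a * c) * (m₁' * mY) * mY)
          + c^2 * ((ENNReal.ofReal a * c) * (m₂' * M))
        = (ENNReal.ofReal a * c) * (c * ((2 * m₁') * mY^2))
          + (ENNReal.ofReal a * c) * (c^2 * (m₂' * M)) := by ring
      _ ≤ (ENNReal.ofReal a * c) * (1 * ((m₂' + 1) * M))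
          + (ENNReal.ofReal a * c) * (1 * (m₂' * M)) := by
          gcongr <;> first | exact hc1 | exact h12 | exact hmY2 | exact pow_le_one' hc1 2
      _ = ENNReal.ofReal a * (2*m₂' + 1) * c * M := by ring
  rw [add_assoc] at key
  refine key.trans ?_
  refine (add_le_add le_rfl hfin).trans_eq ?_
  ring

/-- Second-moment bounds for the rescaled generalized DR processes: the one-step bound
`E[(Y^{(k)}_{n+1})²] ≤ (1 + a(2m₂+1)/k) E[(Y^{(k)}_n)²]` and consequently
`E[(Y^{(k)}_{⌊kt⌋})²] ≤ e^{a(2m₂+1)t} E[(Y^{(k)}_0)²]`. -/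
theorem rescaled_secondMoment_bound
    {Ω : Type*} {mΩ : MeasurableSpace Ω} (P : Measure Ω) [IsProbabilityMeasure P]
    (a m₂ : ℝ) (ha : 0 ≤ a)
    (q : ℕ → ℝ≥0) (hq0 : q 0 = 0) (hq1 : ∑' j, q j = 1)
    (hm₂ : HasSum (fun j : ℕ => ((j : ℝ)) ^ 2 * (q j : ℝ)) m₂)
    (Y η Z : ℕ → ℕ → Ω → ℝ≥0)
    (hYmeas : ∀ k n, Measurable (Y k n)) (hηmeas : ∀ k n, Measurable (η k n))
    (hZmeas : ∀ k n, Measurable (Z k n))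
    (hrec : ∀ k n ω, Y k (n + 1) ω
      = Y k n ω + ((k : ℝ≥0))⁻¹ * η k n ω * Z k n ω - ((k : ℝ≥0))⁻¹)
    (hZlaw : ∀ k n, P.map (Z k n) = qMix q (P.map (Y k n)))
    (hη01 : ∀ k n ω, η k n ω = 0 ∨ η k n ω = 1)
    (hηlaw : ∀ k n, 1 ≤ k → P {ω | η k n ω = 1} = ENNReal.ofReal (a / k))
    (hindep : ∀ k n, IndepFun (fun ω => (η k n ω, Z k n ω)) (Y k n) P)
    (hηZ : ∀ k n, IndepFun (η k n) (Z k n) P)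
    (hint : ∀ k, Integrable (fun ω => ((Y k 0 ω : ℝ)) ^ 2) P) :
    ∀ k : ℕ, 1 ≤ k → a ≤ (k : ℝ) →
      (∀ n : ℕ, ∫ ω, ((Y k (n + 1) ω : ℝ)) ^ 2 ∂P
          ≤ (1 + a * (2 * m₂ + 1) / k) * ∫ ω, ((Y k n ω : ℝ)) ^ 2 ∂P) ∧
      (∀ t : ℝ, 0 ≤ t →
        ∫ ω, ((Y k (Nat.floor ((k : ℝ) * t)) ω : ℝ)) ^ 2 ∂P
          ≤ Real.exp (a * (2 * m₂ + 1) * t) * ∫ ω, ((Y k 0 ω : ℝ)) ^ 2 ∂P) := by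
  intro k hk1 hak
  have hk0R : (0:ℝ) < k := by exact_mod_cast hk1
  have hm₂0 : 0 ≤ m₂ := by
    rw [← hm₂.tsum_eq]; exact tsum_nonneg fun j => by positivity
  -- summability of q
  have hsq : Summable q := by
    by_contra h
    rw [tsum_eq_zero_of_not_summable h] at hq1
    exact one_ne_zero hq1.symm
  have hq1' : (∑' j, (q j : ℝ≥0∞)) = 1 := by
    rw [← ENNReal.coe_tsum hsq, hq1, ENNReal.coe_one]
  have hm₂' : (∑' j : ℕ, (j:ℝ≥0∞)^2 * q j) = ENNReal.ofReal m₂ := by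
    have he : ∀ j:ℕ, (j:ℝ≥0∞)^2 * q j = ENNReal.ofReal ((j:ℝ)^2 * (q j:ℝ)) := by
      intro j
      rw [ENNReal.ofReal_mul (by positivity), ENNReal.ofReal_pow (by positivity),
        ENNReal.ofReal_natCast, ENNReal.ofReal_coe_nnreal]
    simp_rw [he]
    rw [← ENNReal.ofReal_tsum_of_nonneg (fun j => by positivity) hm₂.summable, hm₂.tsum_eq]
  set m₁' : ℝ≥0∞ := ∑' j : ℕ, (j:ℝ≥0∞) * q j with hm₁'
  have h12 : 2 * m₁' ≤ ENNReal.ofReal m₂ + 1 := by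
    rw [hm₁', ← ENNReal.tsum_mul_left]
    have hle : ∀ j:ℕ, 2 * ((j:ℝ≥0∞) * q j) ≤ (j:ℝ≥0∞)^2 * q j + (q j : ℝ≥0∞) := by
      intro j
      have hn : 2*j ≤ j^2 + 1 := by nlinarith
      calc 2 * ((j:ℝ≥0∞) * q j) = ((2*j:ℕ):ℝ≥0∞) * q j := by push_cast; ring
        _ ≤ ((j^2+1:ℕ):ℝ≥0∞) * q j := mul_le_mul_of_nonneg_right (by exact_mod_cast hn) zero_le
        _ = _ := by push_cast; ring
    calc ∑' j : ℕ, 2*((j:ℝ≥0∞)*(q j)) ≤ ∑' j : ℕ, ((j:ℝ≥0∞)^2*q j + (q j:ℝ≥0∞)) :=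
          ENNReal.tsum_le_tsum hle
      _ = ENNReal.ofReal m₂ + 1 := by rw [ENNReal.tsum_add, hm₂', hq1']
  -- the lintegral second moments
  set L : ℕ → ℝ≥0∞ := fun n => ∫⁻ ω, ((Y k n ω:ℝ≥0∞))^2 ∂P with hL
  set C : ℝ≥0∞ := 1 + ENNReal.ofReal a * (2*ENNReal.ofReal m₂ + 1) * ((k:ℝ≥0∞))⁻¹ with hC
  have hkey : ∀ n, L (n+1) ≤ C * L n := by
    intro n
    exact one_step P a ha k hk1 q (Y k n) (η k n) (Z k n) (Y k (n+1))
      (hYmeas k n) (hηmeas k n) (hZmeas k n) (fun ω => hrec k n ω) (hZlaw k n)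
      (fun ω => hη01 k n ω) (hηlaw k n hk1) (hindep k n) (hηZ k n)
      m₁' (ENNReal.ofReal m₂) rfl hm₂' h12
  have hCne : C ≠ ∞ := by
    rw [hC]
    refine ENNReal.add_ne_top.2 ⟨ENNReal.one_ne_top, ?_⟩
    exact ENNReal.mul_ne_top (ENNReal.mul_ne_top ENNReal.ofReal_ne_top
      (ENNReal.add_ne_top.2 ⟨ENNReal.mul_ne_top (by simp) ENNReal.ofReal_ne_top,
        ENNReal.one_ne_top⟩)) (ENNReal.inv_ne_top.2 (Nat.cast_ne_zero.2 (Nat.one_le_iff_ne_zero.mp hk1)))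
  have hpw : ∀ n ω, ((Y k n ω:ℝ≥0∞))^2 = ENNReal.ofReal (((Y k n ω:ℝ))^2) := by
    intro n ω
    rw [ENNReal.ofReal_pow (Y k n ω).coe_nonneg, ENNReal.ofReal_coe_nnreal]
  have hL0 : L 0 ≠ ∞ := by
    rw [hL]
    simp_rw [hpw 0]
    exact (hint k).lintegral_lt_top.ne
  have hLn : ∀ n, L n ≤ C^n * L 0 := by
    intro n
    induction n with
    | zero => simp
    | succ n ih =>
        calc L (n+1) ≤ C * L n := hkey n
          _ ≤ C * (C^n * L 0) := mul_le_mul_of_nonneg_left ih zero_le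
          _ = C^(n+1) * L 0 := by ring
  have hLfin : ∀ n, L n ≠ ∞ := by
    intro n
    exact ((hLn n).trans_lt (ENNReal.mul_lt_top (ENNReal.pow_ne_top hCne).lt_top
      hL0.lt_top)).ne
  have hreal : ∀ n, ∫ ω, ((Y k n ω:ℝ))^2 ∂P = (L n).toReal := by
    intro n
    rw [integral_eq_lintegral_of_nonneg_ae (f := fun ω => ((Y k n ω:ℝ))^2)
      (Filter.Eventually.of_forall fun ω => by positivity)
      (((hYmeas k n).coe_nnreal_real.pow_const 2)).aestronglyMeasurable]
    congr 1
    rw [hL]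
    exact lintegral_congr fun ω => (hpw n ω).symm
  set B : ℝ := 1 + a * (2 * m₂ + 1) / k with hB
  have hB0 : 0 ≤ a * (2 * m₂ + 1) / k := by positivity
  have hCB : C = ENNReal.ofReal B := by
    rw [hB, hC, ENNReal.ofReal_add zero_le_one hB0, ENNReal.ofReal_one]
    congr 1
    rw [div_eq_mul_inv, ENNReal.ofReal_mul (by positivity),
      ENNReal.ofReal_mul ha, ENNReal.ofReal_inv_of_pos hk0R, ENNReal.ofReal_natCast]
    congr 2
    rw [ENNReal.ofReal_add (by positivity) zero_le_one, ENNReal.ofReal_one,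
      ENNReal.ofReal_mul (by norm_num : (0:ℝ) ≤ 2)]
    norm_num
  have hCto : C.toReal = B := by
    rw [hCB, ENNReal.toReal_ofReal (by positivity)]
  constructor
  · intro n
    rw [hreal n, hreal (n+1)]
    calc (L (n+1)).toReal ≤ (C * L n).toReal :=
          ENNReal.toReal_mono (ENNReal.mul_ne_top hCne (hLfin n)) (hkey n)
      _ = C.toReal * (L n).toReal := ENNReal.toReal_mul
      _ = B * (L n).toReal := by rw [hCto]
  · intro t ht
    set N : ℕ := Nat.floor ((k:ℝ) * t) with hN
    have hNk : (N:ℝ) ≤ (k:ℝ) * t := Nat.floor_le (by positivity)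
    have hstep1 : ∫ ω, ((Y k N ω:ℝ))^2 ∂P ≤ B^N * ∫ ω, ((Y k 0 ω:ℝ))^2 ∂P := by
      rw [hreal N, hreal 0]
      calc (L N).toReal ≤ (C^N * L 0).toReal :=
            ENNReal.toReal_mono (ENNReal.mul_ne_top (ENNReal.pow_ne_top hCne) hL0) (hLn N)
        _ = (C.toReal)^N * (L 0).toReal := by rw [ENNReal.toReal_mul, ENNReal.toReal_pow]
        _ = B^N * (L 0).toReal := by rw [hCto]
    refine hstep1.trans ?_
    have hBexp : B^N ≤ Real.exp (a * (2*m₂+1) * t) := by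
      have h1 : B ≤ Real.exp (a * (2*m₂+1) / k) := by
        rw [hB, add_comm]
        exact Real.add_one_le_exp _
      calc B^N ≤ (Real.exp (a * (2*m₂+1) / k))^N :=
            pow_le_pow_left₀ (by rw [hB]; positivity) h1 N
        _ = Real.exp ((N:ℝ) * (a * (2*m₂+1) / k)) := (Real.exp_nat_mul _ N).symm
        _ ≤ Real.exp (a * (2*m₂+1) * t) := by
            apply Real.exp_le_exp.2
            rw [div_eq_mul_inv]
            calc (N:ℝ) * (a * (2*m₂+1) * (k:ℝ)⁻¹) = (a * (2*m₂+1)) * ((N:ℝ) * (k:ℝ)⁻¹) := by ring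
              _ ≤ (a * (2*m₂+1)) * t := by
                  apply mul_le_mul_of_nonneg_left _ (by positivity)
                  rw [← div_eq_mul_inv, div_le_iff₀ hk0R]
                  linarith [hNk]
    apply mul_le_mul_of_nonneg_right hBexp
    rw [hreal 0]
    exact ENNReal.toReal_nonneg
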